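/- Let k, d' ∈ ℕ, let A be a real k×d' matrix, let b ∈ ℝ^k, and let Q = {x ∈ ℝ^{d'} : Ax ≤ b entrywise}. Then every extreme point of Q has all of its coordinates in the subfield of ℝ generated over ℚ by the entries of A and the entries of b. -/

import Mathlib

set_option synthInstance.maxHeartbeats 400000 in
lemma exists_proj (F : Subfield ℝ) : ∃ σ : ℝ → ℝ, (∀ a ∈ F, σ a = a) ∧ (∀ z, σ z ∈ F) ∧
    (∀ z w, σ (z + w) = σ z + σ w) ∧ (∀ a ∈ F, ∀ z, σ (a * z) = a * σ z) := by
  obtain ⟨q, hq⟩ := Submodule.exists_isCompl (Submodule.span F {(1:ℝ)})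
  set π := Submodule.linearProjOfIsCompl _ q hq with hπ
  refine ⟨fun z => (π z : ℝ), ?_, ?_, ?_, ?_⟩
  · intro a ha
    have hmem : a ∈ Submodule.span F {(1:ℝ)} := by
      rw [Submodule.mem_span_singleton]
      exact ⟨⟨a, ha⟩, by simp [Subfield.smul_def]⟩
    show ((π a : ℝ)) = a
    have := Submodule.linearProjOfIsCompl_apply_left hq ⟨a, hmem⟩
    change π _ = _ at this
    rw [show ((⟨a, hmem⟩ : Submodule.span F {(1:ℝ)}) : ℝ) = a from rfl] at this
    rw [this]
  · intro z
    show ((π z : ℝ)) ∈ F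
    have h2 : (π z : ℝ) ∈ Submodule.span F {(1:ℝ)} := (π z).2
    rw [Submodule.mem_span_singleton] at h2
    obtain ⟨c, hc⟩ := h2
    have h3 : (c : ℝ) * 1 = (π z : ℝ) := by rw [← hc]; rfl
    rw [← h3]; simpa using c.2
  · intro z w; show ((π (z+w) : ℝ)) = (π z : ℝ) + (π w : ℝ)
    rw [map_add]; rfl
  · intro a ha z
    show ((π (a*z) : ℝ)) = a * (π z : ℝ)
    have h4 : a * z = (⟨a, ha⟩ : F) • z := rfl
    rw [h4, π.map_smul]
    rfl

/-- Every extreme point of a polyhedron `Q = {x : Ax ≤ b}` has all of its coordinates in the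
subfield of `ℝ` generated (over `ℚ`) by the entries of `A` and `b`. -/
theorem extremePoint_coords_mem_subfield (k d' : ℕ) (A : Matrix (Fin k) (Fin d') ℝ)
    (b : Fin k → ℝ) (Q : Set (Fin d' → ℝ))
    (hQ : Q = {x : Fin d' → ℝ | ∀ i, ∑ j, A i j * x j ≤ b i}) :
    ∀ x ∈ Set.extremePoints ℝ Q, ∀ j : Fin d',
      x j ∈ Subfield.closure
        ((Set.range fun p : Fin k × Fin d' => A p.1 p.2) ∪ Set.range b) := by
  intro x hx j
  set F := Subfield.closure
      ((Set.range fun p : Fin k × Fin d' => A p.1 p.2) ∪ Set.range b) with hF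
  have hA : ∀ i jj, A i jj ∈ F := fun i jj =>
    Subfield.subset_closure (Or.inl ⟨(i, jj), rfl⟩)
  have hb : ∀ i, b i ∈ F := fun i => Subfield.subset_closure (Or.inr ⟨i, rfl⟩)
  obtain ⟨σ, hσF, hσmem, hσadd, hσmul⟩ := exists_proj F
  obtain ⟨hxQ, hext⟩ := hx
  rw [hQ] at hxQ
  set y : Fin d' → ℝ := fun jj => σ (x jj) with hy
  -- σ distributes over finite sums
  have hσsum : ∀ (f : Fin d' → ℝ), σ (∑ jj, f jj) = ∑ jj, σ (f jj) := by
    intro f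
    exact map_sum (AddMonoidHom.mk' σ hσadd) f Finset.univ
  have key : ∀ i, ∑ jj, A i jj * x jj = b i → ∑ jj, A i jj * y jj = b i := by
    intro i hi
    have h1 := congrArg σ hi
    rw [hσsum] at h1
    have h2 : ∀ jj, σ (A i jj * x jj) = A i jj * y jj := fun jj => hσmul _ (hA i jj) _
    rw [Finset.sum_congr rfl (fun jj _ => h2 jj)] at h1
    rw [h1, hσF _ (hb i)]
  -- show y = x
  have hyx : y = x := by
    by_contra hne
    set c : Fin k → ℝ := fun i => ∑ jj, A i jj * (y jj - x jj) with hc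
    have hc_tight : ∀ i, ∑ jj, A i jj * x jj = b i → c i = 0 := by
      intro i hi
      have : c i = (∑ jj, A i jj * y jj) - ∑ jj, A i jj * x jj := by
        rw [hc, ← Finset.sum_sub_distrib]
        exact Finset.sum_congr rfl (fun jj _ => by ring)
      rw [this, key i hi, hi, sub_self]
    set δ : Fin k → ℝ := fun i =>
      if ∑ jj, A i jj * x jj = b i then 1
      else (b i - ∑ jj, A i jj * x jj) / (|c i| + 1) with hδ
    have hδpos : ∀ i, 0 < δ i := by
      intro i
      rw [hδ]
      by_cases hi : ∑ jj, A i jj * x jj = b i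
      · simp [hi]
      · simp only [if_neg hi]
        have h1 : ∑ jj, A i jj * x jj < b i := lt_of_le_of_ne (hxQ i) hi
        have h2 : (0:ℝ) < |c i| + 1 := by positivity
        exact div_pos (by linarith) h2
    set s : Finset ℝ := insert 1 (Finset.image δ Finset.univ) with hs
    have hsne : s.Nonempty := ⟨1, Finset.mem_insert_self _ _⟩
    set ε : ℝ := s.min' hsne with hε
    have hεδ : ∀ i, ε ≤ δ i := fun i =>
      Finset.min'_le _ _ (Finset.mem_insert_of_mem (Finset.mem_image_of_mem δ (Finset.mem_univ i)))
    have hεpos : 0 < ε := by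
      have hmem := Finset.min'_mem s hsne
      rw [← hε] at hmem
      rw [hs, Finset.mem_insert] at hmem
      rcases hmem with h | h
      · rw [h]; norm_num
      · obtain ⟨i, _, hi⟩ := Finset.mem_image.mp h
        rw [← hi]; exact hδpos i
    -- membership lemma
    have hQmem : ∀ t : ℝ, |t| ≤ ε → (fun jj => x jj + t * (y jj - x jj)) ∈ Q := by
      intro t ht
      rw [hQ]
      intro i
      have hsum : ∑ jj, A i jj * (x jj + t * (y jj - x jj))
          = (∑ jj, A i jj * x jj) + t * c i := by
        rw [hc, Finset.mul_sum, ← Finset.sum_add_distrib]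
        exact Finset.sum_congr rfl (fun jj _ => by ring)
      show ∑ jj, A i jj * (x jj + t * (y jj - x jj)) ≤ b i
      rw [hsum]
      by_cases hi : ∑ jj, A i jj * x jj = b i
      · rw [hc_tight i hi, mul_zero, add_zero, hi]
      · have h1 : ∑ jj, A i jj * x jj < b i := lt_of_le_of_ne (hxQ i) hi
        have hδi : δ i = (b i - ∑ jj, A i jj * x jj) / (|c i| + 1) := by rw [hδ]; simp [hi]
        have h2 : (0:ℝ) < |c i| + 1 := by positivity
        have h3 : δ i * (|c i| + 1) = b i - ∑ jj, A i jj * x jj := by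
          rw [hδi, div_mul_cancel₀]; exact ne_of_gt h2
        have h4 : t * c i ≤ |t| * |c i| := (le_abs_self _).trans (abs_mul t (c i)).le
        have h5 : |t| * |c i| ≤ δ i * |c i| :=
          mul_le_mul_of_nonneg_right (ht.trans (hεδ i)) (abs_nonneg _)
        have h6 : δ i * |c i| ≤ δ i * (|c i| + 1) :=
          mul_le_mul_of_nonneg_left (by linarith) (le_of_lt (hδpos i))
        linarith
    have hx₁ : (fun jj => x jj + ε * (y jj - x jj)) ∈ Q :=
      hQmem ε (le_of_eq (abs_of_pos hεpos))
    have hx₂ : (fun jj => x jj + (-ε) * (y jj - x jj)) ∈ Q := by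
      apply hQmem
      rw [abs_neg, abs_of_pos hεpos]
    have hseg : x ∈ openSegment ℝ (fun jj => x jj + ε * (y jj - x jj))
        (fun jj => x jj + (-ε) * (y jj - x jj)) := by
      refine ⟨1/2, 1/2, by norm_num, by norm_num, by norm_num, ?_⟩
      funext jj
      simp only [Pi.add_apply, Pi.smul_apply, smul_eq_mul]
      ring
    have h1 := hext hx₁ hx₂ hseg
    apply hne
    funext jj
    have := congrFun h1 jj
    have : ε * (y jj - x jj) = 0 := by linarith
    rcases mul_eq_zero.mp this with h | h
    · exact absurd h (ne_of_gt hεpos)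
    · linarith
  rw [← hyx]
  exact hσmem (x j)
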